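/- Let T be a (p,q)-banded matrix with nonvanishing extreme diagonals, B^{(b)}_n the right recursion polynomials, and R_{n,N} the associated determinantal polynomials. Then for every N ∈ ℕ: (i) R_{N+j,N} = 0 for every j ∈ {1,…,q−1}; (ii) β_N · R_{N,N} = P_N; and (iii) (−1)^{q−1} · β_{N+1} · R_{N+q,N} = P_{N+1}, all as identities in ℝ[x]. -/

import Mathlib

open Polynomial Matrix Finset Equiv

private lemma sum_range_rec
    (p q : ℕ) (T : ℕ → ℕ → ℝ)
    (hband : ∀ i j, (j + p < i ∨ i + q < j) → T i j = 0)
    (B : ℕ → ℕ → Polynomial ℝ)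
    (hBrec : ∀ b, 1 ≤ b → b ≤ q → ∀ n,
      ∑ m ∈ Finset.Icc (n - p) (n + q), Polynomial.C (T n m) * B b m
        = Polynomial.X * B b n)
    (b : ℕ) (hb1 : 1 ≤ b) (hb2 : b ≤ q) (n K : ℕ) (hn : n + q < K) :
    ∑ m ∈ Finset.range K, Polynomial.C (T n m) * B b m = Polynomial.X * B b n := by
  rw [← hBrec b hb1 hb2 n]
  refine (Finset.sum_subset ?_ ?_).symm
  · intro x hx
    simp only [Finset.mem_Icc] at hx
    exact Finset.mem_range.2 (by omega)
  · intro x hx hx'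
    simp only [Finset.mem_Icc, not_and_or, not_le] at hx'
    have : T n x = 0 := hband n x (by omega)
    simp [this]

private lemma det_B_init
    (q : ℕ) (B : ℕ → ℕ → Polynomial ℝ)
    (hB0 : ∀ b, 1 ≤ b → b ≤ q → ∀ n, n < b - 1 → B b n = 0)
    (hB1 : ∀ b, 1 ≤ b → b ≤ q → B b (b - 1) = 1) :
    (Matrix.of fun j b : Fin q => B ((b : ℕ) + 1) (j : ℕ)).det = 1 := by
  rw [Matrix.det_of_lowerTriangular]
  · refine Finset.prod_eq_one fun i _ => ?_
    have := hB1 ((i : ℕ) + 1) (by omega) (by have := i.2; omega)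
    simpa using this
  · intro i j hij
    have hij' : i < j := hij
    have := hB0 ((j : ℕ) + 1) (by omega) (by have := j.2; omega) (i : ℕ) (by
      have : (i : ℕ) < (j : ℕ) := hij'
      omega)
    simpa using this

private lemma key (p q N : ℕ) (hq : 1 ≤ q) (T : ℕ → ℕ → ℝ)
    (hband : ∀ i j, (j + p < i ∨ i + q < j) → T i j = 0)
    (B : ℕ → ℕ → Polynomial ℝ)
    (hB0 : ∀ b, 1 ≤ b → b ≤ q → ∀ n, n < b - 1 → B b n = 0)
    (hB1 : ∀ b, 1 ≤ b → b ≤ q → B b (b - 1) = 1)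
    (hBrec : ∀ b, 1 ≤ b → b ≤ q → ∀ n,
      ∑ m ∈ Finset.Icc (n - p) (n + q), Polynomial.C (T n m) * B b m
        = Polynomial.X * B b n) :
    (Matrix.of fun i j : Fin (N + 1) => T i j).charpoly
      = Polynomial.C ((-1 : ℝ) ^ ((N+q)*q + (N+1)) * ∏ k ∈ Finset.range (N+1), T k (k+q))
        * (Matrix.of fun j b : Fin q => B ((b:ℕ)+1) (N+1+(j:ℕ))).det := by
  classical
  have srr := sum_range_rec p q T hband B hBrec
  set Msub : Matrix (Fin (N+1)) (Fin (N+1)) (Polynomial ℝ) :=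
    charmatrix (Matrix.of fun i j : Fin (N+1) => T i j) with hMsub
  set Vneg : Matrix (Fin (N+1)) (Fin q) (Polynomial ℝ) :=
    Matrix.of fun i j => -Polynomial.C (T i (N+1+(j:ℕ))) with hVneg
  set Ea : Matrix (Fin q) (Fin (N+1)) (Polynomial ℝ) :=
    Matrix.of fun jr i => if (i:ℕ) = (jr:ℕ) then 1 else 0 with hEa
  set Eb : Matrix (Fin q) (Fin q) (Polynomial ℝ) :=
    Matrix.of fun jr j' => if N+1+(j':ℕ) = (jr:ℕ) then 1 else 0 with hEb
  set A : Matrix (Fin (N+1) ⊕ Fin q) (Fin (N+1) ⊕ Fin q) (Polynomial ℝ) :=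
    Matrix.fromBlocks Msub Vneg Ea Eb with hA
  set Bm : Matrix (Fin (N+1)) (Fin q) (Polynomial ℝ) :=
    Matrix.of fun i b => B ((b:ℕ)+1) (i:ℕ) with hBm
  set Γm : Matrix (Fin q) (Fin q) (Polynomial ℝ) :=
    Matrix.of fun j b => B ((b:ℕ)+1) (N+1+(j:ℕ)) with hΓm
  set G : Matrix (Fin q) (Fin q) (Polynomial ℝ) :=
    Matrix.of fun j b => B ((b:ℕ)+1) (j:ℕ) with hG
  set S : Matrix (Fin (N+1) ⊕ Fin q) (Fin (N+1) ⊕ Fin q) (Polynomial ℝ) :=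
    Matrix.fromBlocks 1 Bm 0 Γm with hS
  -- the recursion, in matrix form
  have hMB : Msub * Bm + Vneg * Γm = 0 := by
    refine Matrix.ext fun i b => ?_
    simp only [Matrix.add_apply, Matrix.mul_apply, Matrix.zero_apply, hMsub, hVneg, hBm, hΓm,
      Matrix.of_apply]
    have h1 : ∀ k : Fin (N+1), charmatrix (Matrix.of fun i j : Fin (N+1) => T i j) i k * B ((b:ℕ)+1) (k:ℕ)
        = (if i = k then Polynomial.X * B ((b:ℕ)+1) (k:ℕ) else 0)
          - Polynomial.C (T i k) * B ((b:ℕ)+1) (k:ℕ) := by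
      intro k
      rw [charmatrix_apply]
      rcases eq_or_ne i k with h | h <;>
        simp [h, Matrix.diagonal_apply, Matrix.one_apply, sub_mul]
    rw [Finset.sum_congr rfl fun k _ => h1 k, Finset.sum_sub_distrib]
    have h2 : (∑ k : Fin (N+1), if i = k then Polynomial.X * B ((b:ℕ)+1) (k:ℕ) else 0)
        = Polynomial.X * B ((b:ℕ)+1) (i:ℕ) := by
      simp
    have h3 : (∑ k : Fin (N+1), Polynomial.C (T i k) * B ((b:ℕ)+1) (k:ℕ))
        = ∑ k ∈ Finset.range (N+1), Polynomial.C (T i k) * B ((b:ℕ)+1) k := by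
      exact Fin.sum_univ_eq_sum_range (fun k => Polynomial.C (T i k) * B ((b:ℕ)+1) k) (N+1)
    have h4 : (∑ j : Fin q, -(Polynomial.C (T i (N+1+(j:ℕ))) * B ((b:ℕ)+1) (N+1+(j:ℕ))))
        = -∑ j ∈ Finset.range q, Polynomial.C (T i (N+1+j)) * B ((b:ℕ)+1) (N+1+j) := by
      rw [← Finset.sum_neg_distrib]
      exact Fin.sum_univ_eq_sum_range
        (fun j => -(Polynomial.C (T i (N+1+j)) * B ((b:ℕ)+1) (N+1+j))) q
    simp only [neg_mul]
    rw [h2, h3, h4]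
    have hsplit : ∑ m ∈ Finset.range (N+1+q), Polynomial.C (T i m) * B ((b:ℕ)+1) m
        = (∑ m ∈ Finset.range (N+1), Polynomial.C (T i m) * B ((b:ℕ)+1) m)
          + ∑ j ∈ Finset.range q, Polynomial.C (T i (N+1+j)) * B ((b:ℕ)+1) (N+1+j) :=
      Finset.sum_range_add _ _ _
    have hrec := srr ((b:ℕ)+1) (by omega) (by have := b.2; omega) (i:ℕ) (N+1+q)
      (by have := i.2; omega)
    rw [hsplit] at hrec
    rw [← hrec]
    ring
  -- the initial-condition block
  have hEG : Ea * Bm + Eb * Γm = G := by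
    refine Matrix.ext fun j b => ?_
    simp only [Matrix.add_apply, Matrix.mul_apply, hEa, hEb, hBm, hΓm, hG, Matrix.of_apply,
      ite_mul, one_mul, zero_mul]
    by_cases hj : (j:ℕ) ≤ N
    · rw [Finset.sum_eq_single (⟨(j:ℕ), by omega⟩ : Fin (N+1))]
      · rw [Finset.sum_eq_zero (fun j' _ => by
          have : ¬ (N+1+(j':ℕ) = (j:ℕ)) := by omega
          simp [this])]
        simp
      · intro k _ hk
        have : ¬ ((k:ℕ) = (j:ℕ)) := by
          intro h; exact hk (Fin.ext h)
        simp [this]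
      · intro h; exact absurd (Finset.mem_univ _) h
    · rw [Finset.sum_eq_zero (fun k _ => by
          have : ¬ ((k:ℕ) = (j:ℕ)) := by have := k.2; omega
          simp [this])]
      rw [Finset.sum_eq_single (⟨(j:ℕ)-(N+1), by have := j.2; omega⟩ : Fin q)]
      · have h1 : N+1+((j:ℕ)-(N+1)) = (j:ℕ) := by omega
        simp [h1]
      · intro j' _ hj'
        have : ¬ (N+1+(j':ℕ) = (j:ℕ)) := by
          intro h; exact hj' (Fin.ext (show (j':ℕ) = (j:ℕ)-(N+1) by omega))
        simp [this]
      · intro h; exact absurd (Finset.mem_univ _) h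
  -- the product identity
  have hprod : A * S = Matrix.fromBlocks Msub 0 Ea G := by
    rw [hA, hS, Matrix.fromBlocks_multiply]
    rw [Matrix.mul_one, Matrix.mul_one, Matrix.mul_zero, Matrix.mul_zero, add_zero, add_zero,
      hMB, hEG]
  have hGdet : G.det = 1 := det_B_init q B hB0 hB1
  have hdet1 : Msub.det = A.det * Γm.det := by
    have h1 : (A * S).det = Msub.det := by
      rw [hprod, Matrix.det_fromBlocks_zero₁₂, hGdet, mul_one]
    have h2 : S.det = Γm.det := by
      rw [hS, Matrix.det_fromBlocks_zero₂₁, Matrix.det_one, one_mul]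
    rw [Matrix.det_mul, h2] at h1
    exact h1.symm
  -- the index equivalence
  set e : (Fin (N+1) ⊕ Fin q) ≃ Fin (N+q+1) :=
    finSumFinEquiv.trans (finCongr (by omega)) with he
  have hval : ∀ su : Fin (N+1) ⊕ Fin q,
      ((e su : Fin (N+q+1)) : ℕ) = Sum.elim (fun i : Fin (N+1) => (i:ℕ))
        (fun j : Fin q => N+1+(j:ℕ)) su := by
    rintro (i | j) <;> simp [he]
  -- the rotation
  set ρ : Equiv.Perm (Fin (N+q+1)) := (finRotate (N+q+1))^q with hρdef
  have hrot : ∀ (k : ℕ) (r : Fin (N+q+1)),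
      ((((finRotate (N+q+1))^k) r : Fin (N+q+1)) : ℕ) = ((r:ℕ) + k) % (N+q+1) := by
    intro k
    induction k with
    | zero => intro r; simp [Nat.mod_eq_of_lt r.2]
    | succ k ih =>
      intro r
      rw [pow_succ', Equiv.Perm.mul_apply, finRotate_succ_apply, Fin.add_def]
      have h1 : ((1 : Fin (N+q+1)) : ℕ) = 1 := by
        rw [Fin.val_one']
        exact Nat.mod_eq_of_lt (by omega)
      rw [h1, ih r]
      show (((r:ℕ) + k) % (N+q+1) + 1) % (N+q+1) = ((r:ℕ) + (k + 1)) % (N+q+1)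
      rw [Nat.mod_add_mod, Nat.add_assoc]
  have hρ : ∀ r : Fin (N+q+1), ((ρ r : Fin (N+q+1)) : ℕ) = ((r:ℕ) + q) % (N+q+1) :=
    fun r => hrot q r
  -- the pulled-back permutation
  set π : Equiv.Perm (Fin (N+1) ⊕ Fin q) := (e.trans ρ).trans e.symm with hπdef
  have hsignπ : Equiv.Perm.sign π = Equiv.Perm.sign ρ :=
    Equiv.Perm.sign_trans_trans_symm ρ e
  have hν : ∀ cu, ((e (π cu) : Fin (N+q+1)) : ℕ) = (((e cu : Fin (N+q+1)) : ℕ) + q) % (N+q+1) := by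
    intro cu
    have : e (π cu) = ρ (e cu) := by simp [hπdef]
    rw [this, hρ]
  -- entries of A in unified numeric form
  have hAentry : ∀ (su cu : Fin (N+1) ⊕ Fin q), A su cu =
      Sum.elim
        (fun i : Fin (N+1) =>
          (if (i:ℕ) = ((e cu : Fin (N+q+1)):ℕ) then Polynomial.X else 0)
            - Polynomial.C (T i ((e cu : Fin (N+q+1)):ℕ)))
        (fun jr : Fin q => if ((e cu : Fin (N+q+1)):ℕ) = (jr:ℕ) then 1 else 0) su := by
    rintro (i | jr) (k | j) <;> rw [hval] <;>
      simp only [Sum.elim_inl, Sum.elim_inr, hA, Matrix.fromBlocks_apply₁₁,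
        Matrix.fromBlocks_apply₁₂, Matrix.fromBlocks_apply₂₁, Matrix.fromBlocks_apply₂₂,
        hMsub, hVneg, hEa, hEb, Matrix.of_apply]
    · rw [charmatrix_apply]
      rcases eq_or_ne i k with h | h
      · simp [h, Matrix.diagonal_apply]
      · have h' : ¬ ((i:ℕ) = (k:ℕ)) := fun hh => h (Fin.ext hh)
        simp [Matrix.diagonal_apply, h, h']
    · have h' : ¬ ((i:ℕ) = N+1+(j:ℕ)) := by have := i.2; omega
      simp [h']
    · rfl
    · rfl
  -- L and W blocks
  set L : Matrix (Fin (N+1)) (Fin (N+1)) (Polynomial ℝ) :=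
    Matrix.of fun i k => (if (i:ℕ) = (k:ℕ)+q then Polynomial.X else 0)
      - Polynomial.C (T i ((k:ℕ)+q)) with hL
  set W : Matrix (Fin (N+1)) (Fin q) (Polynomial ℝ) :=
    Matrix.of fun i j => (if (i:ℕ) = (j:ℕ) then Polynomial.X else 0)
      - Polynomial.C (T i (j:ℕ)) with hW
  have hAπ : A.submatrix id π = Matrix.fromBlocks L W 0 1 := by
    refine Matrix.ext fun su cu => ?_
    have hit : (A.submatrix id π) su cu = A su (π cu) := rfl
    rw [hit, hAentry su (π cu)]
    rcases cu with k | j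
    · have hc : ((e (π (Sum.inl k)) : Fin (N+q+1)) : ℕ) = (k:ℕ) + q := by
        rw [hν, hval]
        simp only [Sum.elim_inl]
        exact Nat.mod_eq_of_lt (by have := k.2; omega)
      rw [hc]
      rcases su with i | jr
      · simp [hL]
      · have hne : ¬((k:ℕ) + q = (jr:ℕ)) := by have := jr.2; omega
        simp [hne]
    · have hc : ((e (π (Sum.inr j)) : Fin (N+q+1)) : ℕ) = (j:ℕ) := by
        rw [hν, hval]
        simp only [Sum.elim_inr]
        have h2 : N+1+(j:ℕ)+q = (N+q+1) + (j:ℕ) := by omega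
        rw [h2, Nat.add_mod_left]
        exact Nat.mod_eq_of_lt (by have := j.2; omega)
      rw [hc]
      rcases su with i | jr
      · simp [hW]
      · simp only [Sum.elim_inr, Matrix.fromBlocks_apply₂₂, Matrix.one_apply]
        by_cases h : jr = j
        · simp [h]
        · have h' : ¬((j:ℕ) = (jr:ℕ)) := fun hh => h (Fin.ext hh.symm)
          simp [h, h']
  -- determinant of L
  have hdetL : L.det = (-1 : Polynomial ℝ)^(N+1)
      * Polynomial.C (∏ k ∈ Finset.range (N+1), T k (k+q)) := by
    rw [Matrix.det_of_lowerTriangular L (by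
      intro i k hik
      have hik' : i < k := hik
      have h1 : ¬((i:ℕ) = (k:ℕ)+q) := by
        have : (i:ℕ) < (k:ℕ) := hik'
        omega
      have h2 : T i ((k:ℕ)+q) = 0 := hband _ _ (by
        have : (i:ℕ) < (k:ℕ) := hik'
        omega)
      simp [hL, h1, h2])]
    have hdiag : ∀ i : Fin (N+1), L i i = (-1) * Polynomial.C (T i ((i:ℕ)+q)) := by
      intro i
      have h1 : ¬((i:ℕ) = (i:ℕ)+q) := by omega
      simp [hL, h1]
      omega
    rw [Finset.prod_congr rfl fun i _ => hdiag i, Finset.prod_mul_distrib]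
    congr 1
    · simp
    · rw [← map_prod]
      congr 1
      exact Fin.prod_univ_eq_prod_range (fun k => T k (k+q)) (N+1)
  -- determinant of A
  have hdetA : A.det = (-1 : Polynomial ℝ)^((N+q)*q) * L.det := by
    have hp := Matrix.det_permute' π A
    rw [hAπ, Matrix.det_fromBlocks_zero₂₁, Matrix.det_one, mul_one] at hp
    have hs : ((Equiv.Perm.sign π : ℤ) : Polynomial ℝ) = (-1)^((N+q)*q) := by
      rw [hsignπ, hρdef, map_pow, sign_finRotate, ← pow_mul]
      push_cast
      ring
    rw [hs] at hp
    have hone : (-1:Polynomial ℝ)^((N+q)*q) * (-1:Polynomial ℝ)^((N+q)*q) = 1 := by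
      rw [← pow_add]
      exact Even.neg_one_pow ⟨(N+q)*q, rfl⟩
    rw [hp, ← mul_assoc, hone, one_mul]
  -- conclusion
  have hchar : (Matrix.of fun i j : Fin (N + 1) => T i j).charpoly = Msub.det := rfl
  rw [hchar, hdet1, hdetA, hdetL]
  have hC : Polynomial.C ((-1 : ℝ) ^ ((N+q)*q + (N+1)) * ∏ k ∈ Finset.range (N+1), T k (k+q))
      = (-1) ^ ((N+q)*q) * ((-1) ^ (N+1) * Polynomial.C (∏ k ∈ Finset.range (N+1), T k (k+q))) := by
    rw [_root_.map_mul, _root_.map_pow, map_neg, Polynomial.C_1, pow_add]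
    ring
  rw [hC]

theorem determinantal_polynomials_R_properties
    (p q : ℕ) (hp : 1 ≤ p) (hq : 1 ≤ q)
    (T : ℕ → ℕ → ℝ)
    (hband : ∀ i j, (j + p < i ∨ i + q < j) → T i j = 0)
    (hext : ∀ n, T (n + p) n ≠ 0 ∧ T n (n + q) ≠ 0)
    (ξ : ℕ → ℕ → ℝ) (B : ℕ → ℕ → Polynomial ℝ)
    (hB0 : ∀ b, 1 ≤ b → b ≤ q → ∀ n, n < b - 1 → B b n = 0)
    (hB1 : ∀ b, 1 ≤ b → b ≤ q → B b (b - 1) = 1)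
    (hBconst : ∀ b, 1 ≤ b → b ≤ q → ∀ j, b ≤ j → j ≤ q - 1 → B b j = Polynomial.C (ξ b j))
    (hBrec : ∀ b, 1 ≤ b → b ≤ q → ∀ n,
      ∑ m ∈ Finset.Icc (n - p) (n + q), Polynomial.C (T n m) * B b m
        = Polynomial.X * B b n)
    (P : ℕ → Polynomial ℝ)
    (hP0 : P 0 = 1)
    (hPsucc : ∀ N, P (N + 1) = (Matrix.of fun i j : Fin (N + 1) => T i j).charpoly)
    (β : ℕ → ℝ)
    (hβ : ∀ N, β N = (-1 : ℝ) ^ ((q - 1) * N) * ∏ k ∈ Finset.range N, T k (k + q))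
    (R : ℕ → ℕ → Polynomial ℝ)
    (hR : ∀ n N, R n N = (Matrix.of fun i b : Fin q =>
        if (i : ℕ) = 0 then B ((b : ℕ) + 1) n else B ((b : ℕ) + 1) (N + (i : ℕ))).det) :
    ∀ N : ℕ,
      (∀ j, 1 ≤ j → j ≤ q - 1 → R (N + j) N = 0) ∧
      Polynomial.C (β N) * R N N = P N ∧
      Polynomial.C ((-1 : ℝ) ^ (q - 1) * β (N + 1)) * R (N + q) N = P (N + 1) := by
  obtain ⟨q', rfl⟩ : ∃ q', q = q' + 1 := ⟨q - 1, by omega⟩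
  have hqq : q' + 1 - 1 = q' := by omega
  -- parity helper
  have hsign : ∀ a b : ℕ, Even (a + b) → ((-1:ℝ))^a = (-1)^b := by
    intro a b hab
    rcases Nat.even_or_odd a with ha | ha
    · have hb : Even b := (Nat.even_add.mp hab).mp ha
      rw [ha.neg_one_pow, hb.neg_one_pow]
    · have hb : Odd b := by
        rcases Nat.even_or_odd b with hb | hb
        · exact absurd ((Nat.even_add.mp hab).mpr hb) ((Nat.not_even_iff_odd.mpr ha))
        · exact hb
      rw [ha.neg_one_pow, hb.neg_one_pow]
  -- Γ-determinant equals R (N+1) (N+1)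
  have hΓR : ∀ N : ℕ, (Matrix.of fun j b : Fin (q'+1) => B ((b:ℕ)+1) (N+1+(j:ℕ))).det
      = R (N+1) (N+1) := by
    intro N
    rw [hR]
    congr 1
    refine Matrix.ext fun j b => ?_
    simp only [Matrix.of_apply]
    by_cases h : (j:ℕ) = 0
    · simp [h]
    · rw [if_neg h]
  -- part (ii) for every index
  have hII : ∀ M : ℕ, Polynomial.C (β M) * R M M = P M := by
    intro M
    cases M with
    | zero =>
      rw [hP0, hβ, hR]
      have h0 : (Matrix.of fun i b : Fin (q'+1) =>
            if (i:ℕ) = 0 then B ((b:ℕ)+1) 0 else B ((b:ℕ)+1) (0 + (i:ℕ)))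
          = Matrix.of fun j b : Fin (q'+1) => B ((b:ℕ)+1) (j:ℕ) := by
        refine Matrix.ext fun i b => ?_
        simp only [Matrix.of_apply]
        by_cases h : (i:ℕ) = 0
        · simp [h]
        · rw [if_neg h, Nat.zero_add]
      rw [h0, det_B_init (q'+1) B hB0 hB1]
      simp
    | succ M =>
      rw [hPsucc, key p (q'+1) M (by omega) T hband B hB0 hB1 hBrec, hΓR]
      congr 2
      rw [hβ, hqq]
      congr 1
      refine hsign _ _ ?_
      have heq : q' * (M+1) + ((M+(q'+1))*(q'+1) + (M+1)) = (q'+1) * (2*M+q'+2) := by ring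
      rw [heq]
      rcases Nat.even_or_odd q' with h | h
      · exact Even.mul_left (by rcases h with ⟨r, hr⟩; exact ⟨M + r + 1, by omega⟩) _
      · exact Even.mul_right (by rcases h with ⟨r, hr⟩; exact ⟨r + 1, by omega⟩) _
  intro N
  refine ⟨?_, hII N, ?_⟩
  · -- part (i)
    intro j hj1 hj2
    rw [hR]
    refine Matrix.det_zero_of_row_eq
      (i := (0 : Fin (q'+1))) (j := (⟨j, by omega⟩ : Fin (q'+1))) ?_ ?_
    · intro h
      have := congrArg Fin.val h
      simp only [Fin.val_zero] at this
      omega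
    · funext b
      simp only [Matrix.of_apply]
      have h1 : ((0 : Fin (q'+1)) : ℕ) = 0 := rfl
      have h2 : ¬(((⟨j, by omega⟩ : Fin (q'+1)) : ℕ) = 0) := by
        show ¬(j = 0)
        omega
      rw [if_pos h1, if_neg h2]
  · -- part (iii)
    set Rm : Matrix (Fin (q'+1)) (Fin (q'+1)) (Polynomial ℝ) :=
      Matrix.of fun i b : Fin (q'+1) =>
        if (i:ℕ) = 0 then B ((b:ℕ)+1) (N+(q'+1)) else B ((b:ℕ)+1) (N+(i:ℕ)) with hRm
    set Γm : Matrix (Fin (q'+1)) (Fin (q'+1)) (Polynomial ℝ) :=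
      Matrix.of fun j b : Fin (q'+1) => B ((b:ℕ)+1) (N+1+(j:ℕ)) with hΓm
    have hsub : Rm.submatrix (finRotate (q'+1)) id = Γm := by
      refine Matrix.ext fun i b => ?_
      simp only [Matrix.submatrix_apply, Matrix.of_apply, id, hRm, hΓm]
      have hv : ((finRotate (q'+1) i : Fin (q'+1)) : ℕ) = ((i:ℕ) + 1) % (q'+1) := by
        rw [finRotate_succ_apply, Fin.add_def, Fin.val_one']
        exact Nat.add_mod_mod _ _ _
      rw [hv]
      by_cases hi : (i:ℕ) < q'
      · have hv' : (((i:ℕ)+1) % (q'+1)) = (i:ℕ)+1 := Nat.mod_eq_of_lt (by omega)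
        rw [hv', if_neg (by omega)]
        congr 1
        omega
      · have hie : (i:ℕ) = q' := by have := i.2; omega
        have hv' : (((i:ℕ)+1) % (q'+1)) = 0 := by
          rw [hie, Nat.mod_self]
        rw [hv', if_pos rfl]
        congr 1
        omega
    have hd := Matrix.det_permute (finRotate (q'+1)) Rm
    rw [hsub, sign_finRotate] at hd
    have hcast : ((((-1:ℤˣ)^q' : ℤˣ) : ℤ) : Polynomial ℝ) = (-1)^q' := by
      push_cast
      ring
    rw [hqq, hcast] at hd
    -- hd : Γm.det = (-1)^q' * Rm.det
    have hgoal2 := hII (N+1)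
    rw [← hΓR N, hd] at hgoal2
    -- hgoal2 : C (β (N+1)) * ((-1)^q' * Rm.det) = P (N+1)
    rw [hR (N + (q'+1)) N]
    have hRmm : (Matrix.of fun i b : Fin (q'+1) =>
        if (i : ℕ) = 0 then B ((b : ℕ) + 1) (N + (q'+1)) else B ((b : ℕ) + 1) (N + (i : ℕ))).det
        = Rm.det := rfl
    rw [hRmm, ← hgoal2, hqq, _root_.map_mul, _root_.map_pow, map_neg, Polynomial.C_1]
    ring
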